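/- Let t ≥ 2, let ζ be a primitive M-th root of unity in ℂ with M even, and define ψ_t(n) = ζ^{(n² − (2^{t+1}−3)²)/(3·2^{t+2})} · χ_t(n) for integers n with χ_t(n) ≠ 0 (the exponent is an integer) and ψ_t(n) = 0 otherwise. Then ψ_t(n + 3·2^t·M) = −ψ_t(n) for all integers n, and consequently ∑_{n=1}^{3·2^{t+1}·M} ψ_t(n) = 0. -/

import Mathlib

/-- The periodic function `χ_t` of period `3·2^(t+1)`. -/
def chi (t : ℕ) (n : ℤ) : ℤ :=
  if n % (3 * 2 ^ (t + 1)) = (2 ^ (t + 1) - 3) % (3 * 2 ^ (t + 1)) ∨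
      n % (3 * 2 ^ (t + 1)) = (3 + 2 ^ (t + 2)) % (3 * 2 ^ (t + 1)) then 1
  else if n % (3 * 2 ^ (t + 1)) = (2 ^ (t + 1) + 3) % (3 * 2 ^ (t + 1)) ∨
      n % (3 * 2 ^ (t + 1)) = (2 ^ (t + 2) - 3) % (3 * 2 ^ (t + 1)) then -1
  else 0

lemma chi_period (t : ℕ) (n k : ℤ) : chi t (n + 3 * 2 ^ (t + 1) * k) = chi t n := by
  unfold chi
  rw [Int.add_mul_emod_self_left]

lemma odd_of_chi_ne_zero (t : ℕ) (n : ℤ) (h : chi t n ≠ 0) : n % 2 = 1 := by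
  unfold chi at h
  have hdvd : (2 : ℤ) ∣ 3 * 2 ^ (t + 1) := ⟨3 * 2 ^ t, by ring⟩
  have key : ∀ r : ℤ, n % (3 * 2 ^ (t + 1)) = r % (3 * 2 ^ (t + 1)) → n % 2 = r % 2 := by
    intro r hr
    rw [← Int.emod_emod_of_dvd n hdvd, hr, Int.emod_emod_of_dvd r hdvd]
  have e1 : (2 : ℤ) ^ (t + 1) = 2 * 2 ^ t := by ring
  have e2 : (2 : ℤ) ^ (t + 2) = 4 * 2 ^ t := by ring
  split_ifs at h with h1 h2'
  · rcases h1 with h1 | h1 <;> have := key _ h1 <;> omega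
  · rcases h2' with h1 | h1 <;> have := key _ h1 <;> omega
  · exact absurd rfl h

theorem psi_antiperiodic_and_sum_zero (t : ℕ) (ht : 2 ≤ t) (M : ℕ) (hM : 0 < M)
    (hMe : Even M) (ζ : ℂ) (hζ : IsPrimitiveRoot ζ M) :
    (∀ n : ℤ,
        ζ ^ (((n + 3 * 2 ^ t * M) ^ 2 - (2 ^ (t + 1) - 3) ^ 2) / (3 * 2 ^ (t + 2))) *
            (chi t (n + 3 * 2 ^ t * M) : ℂ) =
          -(ζ ^ ((n ^ 2 - (2 ^ (t + 1) - 3) ^ 2) / (3 * 2 ^ (t + 2))) * (chi t n : ℂ))) ∧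
      ∑ n ∈ Finset.range (3 * 2 ^ (t + 1) * M),
          ζ ^ ((((n : ℤ) + 1) ^ 2 - (2 ^ (t + 1) - 3) ^ 2) / (3 * 2 ^ (t + 2))) *
            (chi t ((n : ℤ) + 1) : ℂ) = 0 := by
  obtain ⟨m, rfl⟩ := hMe
  have hm : 0 < m := by omega
  have hζ0 : ζ ≠ 0 := hζ.ne_zero (by omega)
  have hζm : ζ ^ m = -1 := by
    have hsq : ζ ^ m * ζ ^ m = 1 := by rw [← pow_add]; exact hζ.pow_eq_one
    rcases mul_self_eq_one_iff.mp hsq with h | h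
    · exact absurd h (hζ.pow_ne_one_of_pos_of_lt hm.ne' (by omega))
    · exact h
  have key : ∀ n : ℤ,
      ζ ^ (((n + 3 * 2 ^ t * ((m : ℤ) + m)) ^ 2 - (2 ^ (t + 1) - 3) ^ 2) / (3 * 2 ^ (t + 2))) *
          (chi t (n + 3 * 2 ^ t * ((m : ℤ) + m)) : ℂ) =
        -(ζ ^ ((n ^ 2 - (2 ^ (t + 1) - 3) ^ 2) / (3 * 2 ^ (t + 2))) * (chi t n : ℂ)) := by
    intro n
    have hchi : chi t (n + 3 * 2 ^ t * ((m : ℤ) + m)) = chi t n := by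
      rw [show n + 3 * 2 ^ t * ((m : ℤ) + m) = n + 3 * 2 ^ (t + 1) * m by ring]
      exact chi_period t n m
    by_cases h0 : chi t n = 0
    · rw [hchi, h0]; simp
    · have hodd : n % 2 = 1 := odd_of_chi_ne_zero t n h0
      rw [hchi]
      have he : ((n + 3 * 2 ^ t * ((m : ℤ) + m)) ^ 2 - (2 ^ (t + 1) - 3) ^ 2) / (3 * 2 ^ (t + 2))
          = (n ^ 2 - (2 ^ (t + 1) - 3) ^ 2) / (3 * 2 ^ (t + 2)) + (m : ℤ) * (n + 3 * 2 ^ t * m) := by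
        rw [show (n + 3 * 2 ^ t * ((m : ℤ) + m)) ^ 2 - (2 ^ (t + 1) - 3) ^ 2
            = (n ^ 2 - (2 ^ (t + 1) - 3) ^ 2) + 3 * 2 ^ (t + 2) * ((m : ℤ) * (n + 3 * 2 ^ t * m))
            by ring]
        exact Int.add_mul_ediv_left _ _ (by positivity)
      rw [he, zpow_add₀ hζ0]
      have hneg : ζ ^ ((m : ℤ) * (n + 3 * 2 ^ t * m)) = -1 := by
        rw [zpow_mul, zpow_natCast, hζm]
        have heven : Even (3 * 2 ^ t * (m : ℤ)) := by
          obtain ⟨k, rfl⟩ := Nat.exists_eq_add_of_le ht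
          exact ⟨3 * 2 ^ (1 + k) * m, by ring⟩
        exact ((Int.odd_iff.mpr hodd).add_even heven).neg_one_zpow
      rw [hneg]; ring
  refine ⟨key, ?_⟩
  have hrange : 3 * 2 ^ (t + 1) * (m + m) = (3 * 2 ^ (t + 1) * m) + (3 * 2 ^ (t + 1) * m) := by
    ring
  rw [hrange, Finset.sum_range_add]
  have h2 : ∀ i ∈ Finset.range (3 * 2 ^ (t + 1) * m),
      ζ ^ (((((3 * 2 ^ (t + 1) * m + i : ℕ) : ℤ) + 1) ^ 2 - (2 ^ (t + 1) - 3) ^ 2) /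
            (3 * 2 ^ (t + 2))) *
          (chi t (((3 * 2 ^ (t + 1) * m + i : ℕ) : ℤ) + 1) : ℂ) =
        -(ζ ^ (((((i : ℕ) : ℤ) + 1) ^ 2 - (2 ^ (t + 1) - 3) ^ 2) / (3 * 2 ^ (t + 2))) *
          (chi t (((i : ℕ) : ℤ) + 1) : ℂ)) := by
    intro i _
    rw [show (((3 * 2 ^ (t + 1) * m + i : ℕ) : ℤ) + 1)
        = ((i : ℤ) + 1) + 3 * 2 ^ t * ((m : ℤ) + m) by push_cast; ring]
    exact key ((i : ℤ) + 1)
  rw [Finset.sum_congr rfl h2, ← Finset.sum_add_distrib]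
  simp
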